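/- Let R be a G-graded ring, S a graded simple left R-module with inertia group Σ(S) = {g ∈ G : S(g) ≅ S}, and g_1,…,g_n,h_1,…,h_n ∈ G. Then S(g_1) ⊕ … ⊕ S(g_n) ≅ S(h_1) ⊕ … ⊕ S(h_n) as graded left R-modules if and only if the list of left cosets g_1Σ(S),…,g_nΣ(S) is a permutation of h_1Σ(S),…,h_nΣ(S). -/

import Mathlib

open DirectSum

universe u v w

variable {G : Type u} [Group G] [DecidableEq G]
variable {R : Type v} [Ring R]

/-- `𝒜` is a `G`-grading of the ring `R`: homogeneous components are additive
subgroups, `1` is homogeneous of trivial degree, multiplication respects degrees,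
and `R` is the internal direct sum of the components. -/
def IsGRing (𝒜 : G → AddSubgroup R) : Prop :=
  (1 : R) ∈ 𝒜 1 ∧
  (∀ (g h : G) (a b : R), a ∈ 𝒜 g → b ∈ 𝒜 h → a * b ∈ 𝒜 (g * h)) ∧
  DirectSum.IsInternal 𝒜

/-- A left ideal is graded when it is spanned by its homogeneous elements. -/
def IsGradedLeftIdeal (𝒜 : G → AddSubgroup R) (I : Submodule R R) : Prop :=
  I = Submodule.span R ((I : Set R) ∩ ⋃ g, (𝒜 g : Set R))

/-- A minimal graded left ideal (a graded-simple graded left submodule of `R`). -/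
def IsMinGradedLeftIdeal (𝒜 : G → AddSubgroup R) (S : Submodule R R) : Prop :=
  IsGradedLeftIdeal 𝒜 S ∧ S ≠ ⊥ ∧
    ∀ T : Submodule R R, T ≤ S → IsGradedLeftIdeal 𝒜 T → T = ⊥ ∨ T = S

/-- A maximal graded left ideal. -/
def IsMaxGradedLeftIdeal (𝒜 : G → AddSubgroup R) (I : Submodule R R) : Prop :=
  IsGradedLeftIdeal 𝒜 I ∧ I ≠ ⊤ ∧
    ∀ J : Submodule R R, IsGradedLeftIdeal 𝒜 J → I < J → J = ⊤

/-- The graded Jacobson radical: intersection of all maximal graded left ideals. -/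
def grJacobson (𝒜 : G → AddSubgroup R) : Submodule R R :=
  sInf {I : Submodule R R | IsMaxGradedLeftIdeal 𝒜 I}

/-- Left annihilator of a subset of `R`. -/
def annLset (X : Set R) : Set R := {r : R | ∀ x ∈ X, r * x = 0}

/-- Right annihilator of a subset of `R`. -/
def annRset (X : Set R) : Set R := {r : R | ∀ x ∈ X, x * r = 0}

/-- Left annihilator of an element, as a left ideal. -/
def annLIdeal (x : R) : Submodule R R where
  carrier := {r : R | r * x = 0}
  add_mem' := by
    intro a b ha hb
    simp only [Set.mem_setOf_eq] at *
    rw [add_mul, ha, hb, add_zero]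
  zero_mem' := by simp
  smul_mem' := by
    intro c a ha
    simp only [Set.mem_setOf_eq, smul_eq_mul] at *
    rw [mul_assoc, ha, mul_zero]

/-- A left ideal is essential if it meets every nonzero left ideal nontrivially. -/
def IsEssentialLeftIdeal (I : Submodule R R) : Prop :=
  ∀ J : Submodule R R, J ≠ ⊥ → I ⊓ J ≠ ⊥

/-- Homogeneous part of degree `g` of the graded singular ideal. -/
def grSingSet (𝒜 : G → AddSubgroup R) (g : G) : Set R :=
  {x : R | x ∈ 𝒜 g ∧ IsEssentialLeftIdeal (annLIdeal x)}

/-- The graded singular ideal `Z^gr(R) = ⊕_g Z^gr(R)_g`. -/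
def grSing (𝒜 : G → AddSubgroup R) : AddSubgroup R :=
  AddSubgroup.closure (⋃ g, grSingSet 𝒜 g)

/-- `R` is graded left self-injective (graded Baer criterion): every morphism of
degree `σ` from a graded left ideal to `R` is right multiplication by an element
of degree `σ`. -/
def GrLeftSelfInjective (𝒜 : G → AddSubgroup R) : Prop :=
  ∀ I : Submodule R R, IsGradedLeftIdeal 𝒜 I → ∀ σ : G, ∀ f : I →ₗ[R] R,
    (∀ (g : G) (x : I), (x : R) ∈ 𝒜 g → f x ∈ 𝒜 (g * σ)) →
    ∃ m ∈ 𝒜 σ, ∀ x : I, f x = (x : R) * m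

/-- Ascending chain condition on graded left ideals. -/
def GrLeftNoetherian (𝒜 : G → AddSubgroup R) : Prop :=
  ∀ f : ℕ → Submodule R R, (∀ n, IsGradedLeftIdeal 𝒜 (f n)) → Monotone f →
    ∃ n, ∀ m, n ≤ m → f m = f n

/-- Descending chain condition on graded left ideals. -/
def GrLeftArtinian (𝒜 : G → AddSubgroup R) : Prop :=
  ∀ f : ℕ → Submodule R R, (∀ n, IsGradedLeftIdeal 𝒜 (f n)) → Antitone f →
    ∃ n, ∀ m, n ≤ m → f m = f n

/-- Graded von Neumann regularity. -/
def GrVNRegular (𝒜 : G → AddSubgroup R) : Prop :=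
  ∀ (g : G) (a : R), a ∈ 𝒜 g → ∃ b : R, a = a * b * a

/-- Graded semisimplicity: `R` is the sum of its minimal graded left ideals. -/
def GrSemisimple (𝒜 : G → AddSubgroup R) : Prop :=
  sSup {S : Submodule R R | IsMinGradedLeftIdeal 𝒜 S} = (⊤ : Submodule R R)

/-- `ℳ` is a `G`-grading of the left `R`-module `M`, compatible with `𝒜`. -/
def IsGModule (𝒜 : G → AddSubgroup R) {M : Type w} [AddCommGroup M] [Module R M]
    (ℳ : G → AddSubgroup M) : Prop :=
  (∀ (g h : G) (a : R) (m : M), a ∈ 𝒜 g → m ∈ ℳ h → a • m ∈ ℳ (g * h)) ∧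
  DirectSum.IsInternal ℳ

/-- A submodule is graded when it is spanned by its homogeneous elements. -/
def IsGradedSubmodule {M : Type w} [AddCommGroup M] [Module R M]
    (ℳ : G → AddSubgroup M) (N : Submodule R M) : Prop :=
  N = Submodule.span R ((N : Set M) ∩ ⋃ g, (ℳ g : Set M))

/-- The inertia group of the graded module `S`: those `σ` with `S(σ) ≅ S` in
`R`-gr. -/
def inertiaSet {S : Type w} [AddCommGroup S] [Module R S]
    (𝒮 : G → AddSubgroup S) : Set G :=
  {σ : G | ∃ e : S ≃ₗ[R] S, ∀ (h : G) (x : S), x ∈ 𝒮 (h * σ) ↔ e x ∈ 𝒮 h}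

set_option linter.unusedSectionVars false

section AuxProofs

variable {S : Type w} [AddCommGroup S] [Module R S]

namespace GradedAux

variable (𝒮 : G → AddSubgroup S)

noncomputable def dec (hs : DirectSum.IsInternal 𝒮) : S ≃+ ⨁ k, 𝒮 k :=
  (AddEquiv.ofBijective (DirectSum.coeAddMonoidHom 𝒮) hs).symm

noncomputable def proj (hs : DirectSum.IsInternal 𝒮) (m : G) : S →+ S :=
  AddMonoidHom.mk' (fun x => (dec 𝒮 hs x m : S)) (by
    intro x y
    simp [map_add, DirectSum.add_apply])

lemma proj_mem (hs : DirectSum.IsInternal 𝒮) (m : G) (x : S) :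
    proj 𝒮 hs m x ∈ 𝒮 m := (dec 𝒮 hs x m).2

lemma dec_of_mem (hs : DirectSum.IsInternal 𝒮) {m : G} {x : S} (hx : x ∈ 𝒮 m) :
    dec 𝒮 hs x = DirectSum.of (fun k => 𝒮 k) m ⟨x, hx⟩ := by
  rw [dec, AddEquiv.symm_apply_eq]
  exact (DirectSum.coeAddMonoidHom_of 𝒮 m ⟨x, hx⟩).symm

lemma proj_of_mem (hs : DirectSum.IsInternal 𝒮) {m : G} {x : S} (hx : x ∈ 𝒮 m) :
    proj 𝒮 hs m x = x := by
  show ((dec 𝒮 hs x) m : S) = x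
  rw [dec_of_mem 𝒮 hs hx, DirectSum.of_eq_same]

lemma proj_of_mem_ne (hs : DirectSum.IsInternal 𝒮) {k m : G} (hkm : k ≠ m) {x : S}
    (hx : x ∈ 𝒮 k) : proj 𝒮 hs m x = 0 := by
  show ((dec 𝒮 hs x) m : S) = 0
  rw [dec_of_mem 𝒮 hs hx, DirectSum.of_eq_of_ne _ _ _ hkm.symm]
  rfl

lemma eq_zero_of_proj (hs : DirectSum.IsInternal 𝒮) {x : S}
    (h : ∀ m, proj 𝒮 hs m x = 0) : x = 0 := by
  apply (dec 𝒮 hs).injective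
  rw [map_zero]
  apply DFinsupp.ext
  intro m
  have hm := h m
  show (dec 𝒮 hs x) m = 0
  exact Subtype.ext hm

lemma eq_zero_of_homog {T : Type*} [AddCommMonoid T] (hs : DirectSum.IsInternal 𝒮)
    (f : S →+ T) (hf : ∀ (m : G) (x : S), x ∈ 𝒮 m → f x = 0) (x : S) : f x = 0 := by
  obtain ⟨w, rfl⟩ := hs.surjective x
  induction w using DirectSum.induction_on with
  | zero => simp
  | of m z => rw [DirectSum.coeAddMonoidHom_of]; exact hf m z z.2
  | add a b ha hb => rw [map_add, map_add, ha, hb, add_zero]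

lemma proj_comm (hs : DirectSum.IsInternal 𝒮) (f : S →+ S) (τ : G → G)
    (hτ : Function.Injective τ) (hf : ∀ (k : G) (x : S), x ∈ 𝒮 k → f x ∈ 𝒮 (τ k))
    (m : G) (x : S) : f (proj 𝒮 hs m x) = proj 𝒮 hs (τ m) (f x) := by
  have h0 : ∀ y, (f.comp (proj 𝒮 hs m) - (proj 𝒮 hs (τ m)).comp f) y = 0 := by
    apply eq_zero_of_homog 𝒮 hs
    intro k y hy
    simp only [AddMonoidHom.sub_apply, AddMonoidHom.comp_apply]
    rcases eq_or_ne k m with rfl | hne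
    · rw [proj_of_mem 𝒮 hs hy, proj_of_mem 𝒮 hs (hf k y hy), sub_self]
    · rw [proj_of_mem_ne 𝒮 hs hne hy,
        proj_of_mem_ne 𝒮 hs (fun h => hne (hτ h)) (hf k y hy), map_zero, sub_self]
  have h1 := h0 x
  simp only [AddMonoidHom.sub_apply, AddMonoidHom.comp_apply, sub_eq_zero] at h1
  exact h1


lemma grSchur (hs : DirectSum.IsInternal 𝒮)
    (hsimple : ∀ x : S, x ≠ 0 → (∃ h : G, x ∈ 𝒮 h) →
      Submodule.span R {x} = (⊤ : Submodule R S))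
    (f : S →ₗ[R] S) (σ : G)
    (hf : ∀ (k : G) (x : S), x ∈ 𝒮 k → f x ∈ 𝒮 (k * σ))
    (hne : ∃ x, f x ≠ 0) :
    ∃ F : S ≃ₗ[R] S, (∀ x, F x = f x) ∧
      ∀ (h : G) (x : S), x ∈ 𝒮 (h * σ) ↔ F.symm x ∈ 𝒮 h := by
  have hτ : Function.Injective (fun k : G => k * σ) := fun a b hab => by
    simpa using mul_left_injective σ hab
  have hcomm : ∀ (m : G) (x : S),
      f (proj 𝒮 hs m x) = proj 𝒮 hs (m * σ) (f x) := by
    intro m x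
    have := proj_comm 𝒮 hs f.toAddMonoidHom (fun k => k * σ) hτ hf m x
    simpa using this
  have hhom : ∃ (m : G) (y : S), y ∈ 𝒮 m ∧ f y ≠ 0 := by
    by_contra hc
    push_neg at hc
    obtain ⟨x, hx⟩ := hne
    have := eq_zero_of_homog 𝒮 hs f.toAddMonoidHom (fun m y hy => hc m y hy) x
    simp only [LinearMap.toAddMonoidHom_coe] at this
    exact hx this
  obtain ⟨m, y, hy, hfy⟩ := hhom
  have hspan : Submodule.span R {f y} = ⊤ := hsimple (f y) hfy ⟨m * σ, hf m y hy⟩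
  have hsurj : Function.Surjective f := by
    rw [← LinearMap.range_eq_top, eq_top_iff, ← hspan]
    exact Submodule.span_le.mpr (Set.singleton_subset_iff.mpr ⟨y, rfl⟩)
  have hinj : Function.Injective f := by
    apply (injective_iff_map_eq_zero f).mpr
    intro a ha
    by_contra ha0
    have hm : ∃ m', proj 𝒮 hs m' a ≠ 0 := by
      by_contra hall
      push_neg at hall
      exact ha0 (eq_zero_of_proj 𝒮 hs hall)
    obtain ⟨m', hm'⟩ := hm
    have h2 : f (proj 𝒮 hs m' a) = 0 := by
      rw [hcomm m' a, ha, map_zero]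
    have hker : (⊤ : Submodule R S) ≤ LinearMap.ker f := by
      rw [← hsimple _ hm' ⟨m', proj_mem 𝒮 hs m' a⟩]
      exact Submodule.span_le.mpr (Set.singleton_subset_iff.mpr h2)
    exact hfy (hker Submodule.mem_top)
  let F := LinearEquiv.ofBijective f ⟨hinj, hsurj⟩
  have hFapp : ∀ x, F x = f x := fun x => rfl
  have hFs : ∀ x, f (F.symm x) = x := fun x => F.apply_symm_apply x
  refine ⟨F, hFapp, ?_⟩
  intro h x
  constructor
  · intro hx
    have h3 : f (proj 𝒮 hs h (F.symm x)) = x := by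
      rw [hcomm h (F.symm x), hFs x, proj_of_mem 𝒮 hs hx]
    have := hinj (h3.trans (hFs x).symm)
    rw [← this]
    exact proj_mem 𝒮 hs h _
  · intro hx
    have := hf h _ hx
    rwa [hFs x] at this



lemma consZero_add {n : ℕ} (v w : Fin n → S) :
    (Fin.cons 0 (v + w) : Fin (n+1) → S) = Fin.cons 0 v + Fin.cons 0 w := by
  funext i
  refine Fin.cases ?_ ?_ i
  · simp
  · intro i; simp

lemma consZero_smul {n : ℕ} (c : R) (v : Fin n → S) :
    (Fin.cons 0 (c • v) : Fin (n+1) → S) = c • (Fin.cons 0 v : Fin (n+1) → S) := by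
  funext i
  refine Fin.cases ?_ ?_ i
  · simp
  · intro i; simp

lemma singleZero_neg {n : ℕ} (a : S) :
    (Pi.single (0 : Fin (n+1)) (-a) : Fin (n+1) → S) = -Pi.single 0 a := by
  funext i
  rcases eq_or_ne i 0 with rfl | hne
  · simp
  · simp [Pi.single_eq_of_ne hne]

lemma inertia_inv {σ : G} (hmem : σ ∈ inertiaSet (R := R) 𝒮) :
    σ⁻¹ ∈ inertiaSet (R := R) 𝒮 := by
  obtain ⟨e, he⟩ := hmem
  refine ⟨e.symm, fun h x => ?_⟩
  have h1 := he (h * σ⁻¹) (e.symm x)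
  rw [e.apply_symm_apply] at h1
  have hg : h * σ⁻¹ * σ = h := by group
  rw [hg] at h1
  exact h1.symm

lemma forward_aux (hs : DirectSum.IsInternal 𝒮) (hSnz : ∃ x : S, x ≠ 0)
    (hsimple : ∀ x : S, x ≠ 0 → (∃ h : G, x ∈ 𝒮 h) →
      Submodule.span R {x} = (⊤ : Submodule R S)) :
    ∀ (n : ℕ) (gv hv : Fin n → G)
      (e : (Fin n → S) ≃ₗ[R] (Fin n → S)),
      (∀ (h : G) (v : Fin n → S),
        (∀ i, v i ∈ 𝒮 (h * gv i)) ↔ (∀ i, e v i ∈ 𝒮 (h * hv i))) →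
      ∃ π : Equiv.Perm (Fin n),
        ∀ i, (gv i)⁻¹ * hv (π i) ∈ inertiaSet (R := R) 𝒮 := by
  intro n
  induction n with
  | zero =>
    intro gv hv e he
    exact ⟨Equiv.refl _, fun i => i.elim0⟩
  | succ n IH =>
    intro gv hv e he
    let ι0 : S →ₗ[R] (Fin (n+1) → S) := LinearMap.single R (fun _ => S) 0
    let fm : Fin (n+1) → (S →ₗ[R] S) := fun j =>
      (LinearMap.proj j).comp
        ((e : (Fin (n+1) → S) →ₗ[R] (Fin (n+1) → S)).comp ι0)
    have hfm_app : ∀ (jj : Fin (n+1)) (x : S),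
        fm jj x = e (Pi.single 0 x) jj := fun _ _ => rfl
    have hsingle_mem : ∀ (k : G) (x : S), x ∈ 𝒮 (k * gv 0) →
        ∀ i, (Pi.single (0 : Fin (n+1)) x : Fin (n+1) → S) i ∈ 𝒮 (k * gv i) := by
      intro k x hx i
      rcases eq_or_ne i 0 with rfl | hne
      · simpa using hx
      · rw [Pi.single_eq_of_ne hne]; exact zero_mem _
    have hfm_graded : ∀ (jj : Fin (n+1)) (m : G) (x : S), x ∈ 𝒮 m →
        fm jj x ∈ 𝒮 (m * ((gv 0)⁻¹ * hv jj)) := by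
      intro jj m x hx
      have h1 : ∀ i, (Pi.single (0 : Fin (n+1)) x : Fin (n+1) → S) i ∈
          𝒮 ((m * (gv 0)⁻¹) * gv i) := by
        apply hsingle_mem
        have hg : m * (gv 0)⁻¹ * gv 0 = m := by group
        rwa [hg]
      have h2 := (he (m * (gv 0)⁻¹) (Pi.single 0 x)).mp h1 jj
      rw [hfm_app]
      have hg : m * (gv 0)⁻¹ * hv jj = m * ((gv 0)⁻¹ * hv jj) := by group
      rwa [hg] at h2
    obtain ⟨x0, hx0⟩ := hSnz
    have hsne : (Pi.single (0 : Fin (n+1)) x0 : Fin (n+1) → S) ≠ 0 := by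
      intro hcon
      apply hx0
      have h3 := congrFun hcon 0
      simpa using h3
    have hene : e (Pi.single 0 x0) ≠ 0 := by
      intro hcon
      apply hsne
      apply e.injective
      rw [hcon, map_zero]
    obtain ⟨j, hj⟩ : ∃ j, e (Pi.single (0 : Fin (n+1)) x0) j ≠ 0 := by
      by_contra hall
      push_neg at hall
      exact hene (funext hall)
    obtain ⟨F, hFf, hFiff⟩ := grSchur 𝒮 hs hsimple (fm j) ((gv 0)⁻¹ * hv j)
      (hfm_graded j) ⟨x0, by rw [hfm_app]; exact hj⟩
    have hFe : ∀ x : S, e (Pi.single 0 x) j = F x := fun x => (hFf x).symm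
    -- the reduced equivalence
    let e' : (Fin n → S) ≃ₗ[R] (Fin n → S) :=
      { toFun := fun v => Fin.removeNth j
          (e (Fin.cons 0 v - Pi.single 0 (F.symm (e (Fin.cons 0 v) j)))),
        map_add' := by
          intro v w
          have hK : (Fin.cons 0 (v + w) : Fin (n+1) → S) -
              Pi.single 0 (F.symm (e (Fin.cons 0 (v + w)) j)) =
              (Fin.cons 0 v - Pi.single 0 (F.symm (e (Fin.cons 0 v) j))) +
              (Fin.cons 0 w - Pi.single 0 (F.symm (e (Fin.cons 0 w) j))) := by
            rw [consZero_add, map_add, Pi.add_apply, map_add, Pi.single_add]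
            abel
          show Fin.removeNth j _ = _
          rw [hK, map_add]
          rfl
        map_smul' := by
          intro c v
          have hK : (Fin.cons 0 (c • v) : Fin (n+1) → S) -
              Pi.single 0 (F.symm (e (Fin.cons 0 (c • v)) j)) =
              c • ((Fin.cons 0 v : Fin (n+1) → S) -
                Pi.single 0 (F.symm (e (Fin.cons 0 v) j))) := by
            rw [consZero_smul, map_smul, Pi.smul_apply, map_smul, smul_sub]
            rw [Pi.single_smul]
          show Fin.removeNth j
              (e ((Fin.cons 0 (c • v) : Fin (n+1) → S) -
                Pi.single (0 : Fin (n+1)) (F.symm (e (Fin.cons 0 (c • v)) j)))) =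
            (RingHom.id R) c • Fin.removeNth j
              (e ((Fin.cons 0 v : Fin (n+1) → S) -
                Pi.single (0 : Fin (n+1)) (F.symm (e (Fin.cons 0 v) j))))
          simp only [RingHom.id_apply]
          rw [hK, map_smul]
          rfl
        invFun := fun w => Fin.tail (e.symm (Fin.insertNth j 0 w)),
        left_inv := by
          intro v
          have hk0 : e (Fin.cons 0 v - Pi.single 0 (F.symm (e (Fin.cons 0 v) j))) j
              = 0 := by
            rw [map_sub, Pi.sub_apply, hFe, F.apply_symm_apply, sub_self]
          have h7 := Fin.insertNth_self_removeNth j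
            (e (Fin.cons 0 v - Pi.single 0 (F.symm (e (Fin.cons 0 v) j))))
          rw [hk0] at h7
          show Fin.tail (e.symm (Fin.insertNth j 0 (Fin.removeNth j
            (e ((Fin.cons 0 v : Fin (n+1) → S) -
              Pi.single (0 : Fin (n+1)) (F.symm (e (Fin.cons 0 v) j))))))) = v
          rw [h7, e.symm_apply_apply]
          funext i
          show ((Fin.cons 0 v : Fin (n+1) → S) -
            (Pi.single 0 (F.symm (e (Fin.cons 0 v) j)) : Fin (n+1) → S)) i.succ = v i
          rw [Pi.sub_apply, Fin.cons_succ,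
            Pi.single_eq_of_ne (Fin.succ_ne_zero i), sub_zero]
        right_inv := by
          intro w
          set u := e.symm (Fin.insertNth j 0 w) with hu
          have hu0 : (Fin.cons (0 : S) (Fin.tail u) : Fin (n+1) → S) =
              u - Pi.single 0 (u 0) := by
            funext i'
            refine Fin.cases ?_ ?_ i'
            · simp
            · intro i
              simp [Fin.cons_succ, Fin.tail, Pi.single_eq_of_ne (Fin.succ_ne_zero i)]
          have h8 : e (Fin.cons 0 (Fin.tail u)) =
              Fin.insertNth j 0 w - e (Pi.single 0 (u 0)) := by
            rw [hu0, map_sub, hu, e.apply_symm_apply]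
          have h9 : e (Fin.cons 0 (Fin.tail u)) j = -(F (u 0)) := by
            rw [h8, Pi.sub_apply, Fin.insertNth_apply_same, zero_sub, hFe]
          have h10 : F.symm (e (Fin.cons 0 (Fin.tail u)) j) = -(u 0) := by
            rw [h9, map_neg, F.symm_apply_apply]
          have h11 : (Fin.cons 0 (Fin.tail u) : Fin (n+1) → S) -
              Pi.single 0 (F.symm (e (Fin.cons 0 (Fin.tail u)) j)) = u := by
            rw [h10, hu0, singleZero_neg]
            abel
          show Fin.removeNth j (e _) = w
          rw [h11, hu, e.apply_symm_apply]
          funext i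
          exact Fin.insertNth_apply_succAbove (α := fun _ => S) j 0 w i }
    have he'app : ∀ (v : Fin n → S) (i : Fin n),
        e' v i = e ((Fin.cons 0 v : Fin (n+1) → S) -
          Pi.single (0 : Fin (n+1)) (F.symm (e (Fin.cons 0 v) j))) (j.succAbove i) :=
      fun _ _ => rfl
    have he'symm : ∀ (w : Fin n → S) (i : Fin n),
        e'.symm w i = e.symm (Fin.insertNth j 0 w) i.succ := fun _ _ => rfl
    have he' : ∀ (h : G) (v : Fin n → S),
        (∀ i, v i ∈ 𝒮 (h * (gv ∘ Fin.succ) i)) ↔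
        (∀ i, e' v i ∈ 𝒮 (h * (hv ∘ j.succAbove) i)) := by
      intro h v
      constructor
      · intro hvv
        have hvt : ∀ i', (Fin.cons (0 : S) v : Fin (n+1) → S) i' ∈ 𝒮 (h * gv i') := by
          intro i'
          refine Fin.cases ?_ ?_ i'
          · rw [Fin.cons_zero]; exact zero_mem _
          · intro i; rw [Fin.cons_succ]; exact hvv i
        have h12 := (he h (Fin.cons 0 v)).mp hvt
        have hs_mem : F.symm (e (Fin.cons 0 v) j) ∈ 𝒮 (h * gv 0) := by
          apply (hFiff (h * gv 0) _).mp
          have hg : h * gv 0 * ((gv 0)⁻¹ * hv j) = h * hv j := by group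
          rw [hg]
          exact h12 j
        have hK_mem : ∀ i', ((Fin.cons 0 v : Fin (n+1) → S) -
            (Pi.single 0 (F.symm (e (Fin.cons 0 v) j)) : Fin (n+1) → S)) i' ∈
            𝒮 (h * gv i') := by
          intro i'
          rw [Pi.sub_apply]
          apply sub_mem (hvt i')
          rcases eq_or_ne i' 0 with rfl | hne
          · rw [Pi.single_eq_same]; exact hs_mem
          · rw [Pi.single_eq_of_ne hne]; exact zero_mem _
        have h13 := (he h _).mp hK_mem
        intro i
        rw [he'app]
        exact h13 (j.succAbove i)
      · intro hw i
        have hbwd : ∀ i', e'.symm (e' v) i' ∈ 𝒮 (h * gv i'.succ) := by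
          intro i'
          have hwt : ∀ j', (Fin.insertNth j (0 : S) (e' v) : Fin (n+1) → S) j' ∈
              𝒮 (h * hv j') := by
            intro j'
            refine Fin.succAboveCases j ?_ ?_ j'
            · rw [Fin.insertNth_apply_same]; exact zero_mem _
            · intro i''
              rw [Fin.insertNth_apply_succAbove]
              exact hw i''
          have h14 := (he h (e.symm (Fin.insertNth j 0 (e' v)))).mpr
            (by rw [e.apply_symm_apply]; exact hwt)
          rw [he'symm]
          exact h14 i'.succ
        have h15 := hbwd i
        rw [e'.symm_apply_apply] at h15
        exact h15
    obtain ⟨π', hπ'⟩ := IH (gv ∘ Fin.succ) (hv ∘ j.succAbove) e' he'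
    have hFinj : Function.Injective
        (Fin.cons j (fun i => j.succAbove (π' i)) : Fin (n+1) → Fin (n+1)) := by
      intro a b hab
      rcases Fin.eq_zero_or_eq_succ a with rfl | ⟨a', rfl⟩ <;>
        rcases Fin.eq_zero_or_eq_succ b with rfl | ⟨b', rfl⟩
      · rfl
      · rw [Fin.cons_zero, Fin.cons_succ] at hab
        exact absurd hab.symm (Fin.succAbove_ne j (π' b'))
      · rw [Fin.cons_zero, Fin.cons_succ] at hab
        exact absurd hab (Fin.succAbove_ne j (π' a'))
      · rw [Fin.cons_succ, Fin.cons_succ] at hab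
        have h16 := Fin.succAbove_right_injective (p := j) hab
        rw [π'.injective h16]
    refine ⟨Equiv.ofBijective _ (Finite.injective_iff_bijective.mp hFinj), ?_⟩
    intro i
    have hπapp : ∀ i, (Equiv.ofBijective _ (Finite.injective_iff_bijective.mp hFinj)) i =
        (Fin.cons j (fun i => j.succAbove (π' i)) : Fin (n+1) → Fin (n+1)) i :=
      fun _ => rfl
    rcases Fin.eq_zero_or_eq_succ i with rfl | ⟨i', rfl⟩
    · rw [hπapp, Fin.cons_zero]
      exact ⟨F.symm, hFiff⟩
    · rw [hπapp, Fin.cons_succ]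
      have h17 := hπ' i'
      simpa [Function.comp] using h17

end GradedAux

end AuxProofs


/-- for a graded simple `S`,
`S(g_1) ⊕ … ⊕ S(g_n) ≅ S(h_1) ⊕ … ⊕ S(h_n)` in `R`-gr (direct sums modelled on
`Fin n → S`, with degree-`h` component `{v | ∀ i, v i ∈ S_{h·g_i}}`) iff the
list of left cosets `g_i·Σ(S)` is a permutation of the list `h_i·Σ(S)`. -/
theorem direct_sum_of_shifts_iso_iff_cosets_permuted
    (𝒜 : G → AddSubgroup R) (h𝒜 : IsGRing 𝒜)
    {S : Type w} [AddCommGroup S] [Module R S]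
    (𝒮 : G → AddSubgroup S) (hS : IsGModule 𝒜 𝒮)
    (hSnz : ∃ x : S, x ≠ 0)
    (hSsimple : ∀ x : S, x ≠ 0 → (∃ h : G, x ∈ 𝒮 h) →
      Submodule.span R {x} = (⊤ : Submodule R S))
    (n : ℕ) (gv hv : Fin n → G) :
    (∃ e : (Fin n → S) ≃ₗ[R] (Fin n → S),
        ∀ (h : G) (v : Fin n → S),
          (∀ i, v i ∈ 𝒮 (h * gv i)) ↔ (∀ i, e v i ∈ 𝒮 (h * hv i))) ↔
      ∃ π : Equiv.Perm (Fin n), ∀ i, (gv i)⁻¹ * hv (π i) ∈ inertiaSet (R := R) 𝒮 := by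
  have hs := hS.2
  constructor
  · rintro ⟨e, he⟩
    exact GradedAux.forward_aux 𝒮 hs hSnz hSsimple n gv hv e he
  · rintro ⟨π, hπ⟩
    have hσ' : ∀ j, ∃ wE : S ≃ₗ[R] S, ∀ (h : G) (x : S),
        x ∈ 𝒮 (h * ((gv (π.symm j))⁻¹ * hv j)⁻¹) ↔ wE x ∈ 𝒮 h := by
      intro j
      have h1 := GradedAux.inertia_inv 𝒮 (hπ (π.symm j))
      rwa [Equiv.apply_symm_apply] at h1
    choose W hW using hσ'
    refine ⟨(LinearEquiv.funCongrLeft R S π.symm).trans (LinearEquiv.piCongrRight W), ?_⟩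
    intro h v
    have hEapp : ∀ (v : Fin n → S) (j : Fin n),
        ((LinearEquiv.funCongrLeft R S π.symm).trans (LinearEquiv.piCongrRight W)) v j
          = W j (v (π.symm j)) := fun _ _ => rfl
    constructor
    · intro hvv j
      rw [hEapp]
      apply (hW j (h * hv j) _).mp
      have hgr : h * hv j * ((gv (π.symm j))⁻¹ * hv j)⁻¹ = h * gv (π.symm j) := by
        group
      rw [hgr]
      exact hvv (π.symm j)
    · intro hw i
      have h1 := hw (π i)
      rw [hEapp, Equiv.symm_apply_apply] at h1
      have h2 := (hW (π i) (h * hv (π i)) (v i)).mpr h1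
      rw [Equiv.symm_apply_apply] at h2
      have hgr : h * hv (π i) * ((gv i)⁻¹ * hv (π i))⁻¹ = h * gv i := by group
      rwa [hgr] at h2
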